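/- Let C be a G-covariant channel with a pure fixed point |φ⟩, admitting a Stinespring dilation C(ρ) = Tr_E[V(ρ ⊗ |η⟩⟨η|)V†]. Then every unit vector |ψ⟩ in any subspace S_k spanned by a connected component of the confusability graph Γ(G, H, U, |φ⟩) satisfies C(|ψ⟩⟨ψ|) = |ψ⟩⟨ψ|. -/

import Mathlib

open scoped InnerProductSpace

lemma aux_eq_of_inner_one {E : Type*} [NormedAddCommGroup E] [InnerProductSpace ℂ E]
    {x y : E} (hx : ⟪x,x⟫_ℂ = 1) (hy : ⟪y,y⟫_ℂ = 1) (hxy : ⟪x,y⟫_ℂ = 1) : x = y := by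
  have hyx : ⟪y,x⟫_ℂ = 1 := by rw [← inner_conj_symm, hxy]; simp
  have h : ⟪x - y, x - y⟫_ℂ = 0 := by
    rw [inner_sub_sub_self, hx, hy, hxy, hyx]; ring
  have := inner_self_eq_zero.mp h
  rwa [sub_eq_zero] at this

lemma aux_pure {H HE HT ι : Type*} [Fintype ι]
    [NormedAddCommGroup H] [InnerProductSpace ℂ H]
    [NormedAddCommGroup HE] [InnerProductSpace ℂ HE]
    [NormedAddCommGroup HT] [InnerProductSpace ℂ HT]
    (t : H →ₗ[ℂ] HE →ₗ[ℂ] HT)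
    (ht : ∀ (a : H) (b : HE) (c : H) (d : HE), ⟪t a b, t c d⟫_ℂ = ⟪a, c⟫_ℂ * ⟪b, d⟫_ℂ)
    (V : HT ≃ₗᵢ[ℂ] HT) (η : HE) (hη : ‖η‖ = 1)
    (e : OrthonormalBasis ι ℂ HE)
    (x : H) (hx : ‖x‖ = 1)
    (hsum : ∑ i, ⟪t x (e i), V (⟪t x η, V.symm (t x (e i))⟫_ℂ • t x η)⟫_ℂ = 1) :
    ∃ χ : HE, ‖χ‖ = 1 ∧ V (t x η) = t x χ := by
  classical
  set w : HT := V (t x η) with hw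
  have hxx : ⟪x, x⟫_ℂ = 1 := by rw [inner_self_eq_norm_sq_to_K, hx]; norm_num
  have hηη : ⟪η, η⟫_ℂ = 1 := by rw [inner_self_eq_norm_sq_to_K, hη]; norm_num
  set d : ι → ℂ := fun i => ⟪t x (e i), w⟫_ℂ with hd
  have hsum' : ∑ i, (starRingEnd ℂ) (d i) * d i = 1 := by
    rw [← hsum]
    refine Finset.sum_congr rfl fun i _ => ?_
    rw [map_smul, inner_smul_right, ← hw]
    congr 1
    rw [← V.inner_map_map (t x η), V.apply_symm_apply, ← hw, ← inner_conj_symm]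
  have hortho := orthonormal_iff_ite.mp e.orthonormal
  set χ : HE := ∑ i, d i • e i with hχ
  have hχχ : ⟪χ, χ⟫_ℂ = 1 := by
    rw [hχ, inner_sum]
    rw [← hsum']
    refine Finset.sum_congr rfl fun j _ => ?_
    rw [inner_smul_right, sum_inner]
    simp only [inner_smul_left, hortho]
    simp [Finset.sum_ite_eq]
    ring
  have htxχ : t x χ = ∑ i, d i • t x (e i) := by
    rw [hχ, map_sum]
    exact Finset.sum_congr rfl fun i _ => by rw [map_smul]
  have hχw : ⟪t x χ, w⟫_ℂ = 1 := by
    rw [htxχ, sum_inner, ← hsum']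
    refine Finset.sum_congr rfl fun i _ => by rw [inner_smul_left]
  have hww : ⟪w, w⟫_ℂ = 1 := by
    rw [hw, V.inner_map_map, ht, hxx, hηη, one_mul]
  have hχχ' : ⟪t x χ, t x χ⟫_ℂ = 1 := by rw [ht, hxx, hχχ, one_mul]
  have heq : t x χ = w := aux_eq_of_inner_one hχχ' hww hχw
  have hnχ : ‖χ‖ = 1 := by
    have h3 : ‖χ‖^2 = 1 := by
      rw [@norm_sq_eq_re_inner ℂ, hχχ]; simp
    nlinarith [norm_nonneg χ]
  exact ⟨χ, hnχ, heq.symm⟩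

/-- **Decoherence free subspaces of covariant channels.**  A `G`-covariant channel
`C` with a pure fixed point `|φ⟩⟨φ|`, given by a Stinespring dilation
`C(ρ) = Tr_E[V(ρ ⊗ |η⟩⟨η|)V†]` (expressed via matrix elements in an orthonormal
basis `e` of the environment), fixes `|ψ⟩⟨ψ|` for every unit vector `ψ` in any
subspace `S_k` spanned by a connected component of the confusability graph
`Γ(G, H, U, |φ⟩)`. -/
theorem covariant_channel_decoherence_free_subspaces
    {G : Type*} [Group G] {H HE HT : Type*} {ι : Type*} [Fintype ι]
    [NormedAddCommGroup H] [InnerProductSpace ℂ H] [FiniteDimensional ℂ H]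
    [NormedAddCommGroup HE] [InnerProductSpace ℂ HE] [FiniteDimensional ℂ HE]
    [NormedAddCommGroup HT] [InnerProductSpace ℂ HT] [FiniteDimensional ℂ HT]
    (U : G →* (H ≃ₗᵢ[ℂ] H))
    (C : (H →L[ℂ] H) →ₗ[ℂ] (H →L[ℂ] H))
    -- covariance of the channel
    (hcov : ∀ (g : G) (ρ : H →L[ℂ] H),
      C (((U g).toLinearIsometry.toContinuousLinearMap).comp
          (ρ.comp ((U g).symm.toLinearIsometry.toContinuousLinearMap))) =
        ((U g).toLinearIsometry.toContinuousLinearMap).comp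
          ((C ρ).comp ((U g).symm.toLinearIsometry.toContinuousLinearMap)))
    -- pure fixed point
    (φ : H) (hφ : ‖φ‖ = 1)
    (hfix : C ((innerSL ℂ φ).smulRight φ) = (innerSL ℂ φ).smulRight φ)
    -- `t a b` represents the product vector `a ⊗ b` in `H ⊗ H_E`
    (t : H →ₗ[ℂ] HE →ₗ[ℂ] HT)
    (ht : ∀ (a : H) (b : HE) (c : H) (d : HE), ⟪t a b, t c d⟫_ℂ = ⟪a, c⟫_ℂ * ⟪b, d⟫_ℂ)
    (hspan : Submodule.span ℂ {z : HT | ∃ a b, t a b = z} = ⊤)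
    -- Stinespring dilation of `C` with unitary `V` and environment state `η`
    (V : HT ≃ₗᵢ[ℂ] HT) (η : HE) (hη : ‖η‖ = 1)
    (e : OrthonormalBasis ι ℂ HE)
    (hdil : ∀ ψ a b : H,
      ⟪a, C ((innerSL ℂ ψ).smulRight ψ) b⟫_ℂ =
        ∑ i : ι, ⟪t a (e i), V (⟪t ψ η, V.symm (t b (e i))⟫_ℂ • t ψ η)⟫_ℂ)
    -- the connectedness relation of the confusability graph
    (Conn : G → G → Prop)
    (hConn : Conn = Relation.ReflTransGen (fun g h : G => ⟪U g φ, U h φ⟫_ℂ ≠ 0))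
    -- conclusion: every unit vector in a component subspace is preserved
    (g₀ : G) (ψ : H)
    (hψ : ψ ∈ Submodule.span ℂ ((fun g => U g φ) '' {g : G | Conn g₀ g}))
    (hψ1 : ‖ψ‖ = 1) :
    C ((innerSL ℂ ψ).smulRight ψ) = (innerSL ℂ ψ).smulRight ψ := by
  classical
  have hηη : ⟪η, η⟫_ℂ = 1 := by rw [inner_self_eq_norm_sq_to_K, hη]; norm_num
  -- all the states U g φ are fixed points
  have hfixg : ∀ g : G, C ((innerSL ℂ (U g φ)).smulRight (U g φ)) =
      (innerSL ℂ (U g φ)).smulRight (U g φ) := by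
    intro g
    have hop : (innerSL ℂ (U g φ)).smulRight (U g φ) =
        ((U g).toLinearIsometry.toContinuousLinearMap).comp
          (((innerSL ℂ φ).smulRight φ).comp
            ((U g).symm.toLinearIsometry.toContinuousLinearMap)) := by
      ext b
      simp only [ContinuousLinearMap.smulRight_apply, innerSL_apply_apply,
        ContinuousLinearMap.comp_apply, LinearIsometry.coe_toContinuousLinearMap,
        LinearIsometryEquiv.coe_toLinearIsometry]
      rw [map_smul]
      congr 1
      conv_lhs => rw [show b = (U g) ((U g).symm b) from ((U g).apply_symm_apply b).symm]
      rw [(U g).inner_map_map]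
    rw [hop, hcov, hfix, ← hop]
  -- each U g φ has its environment output state
  have hpure : ∀ g : G, ∃ χ : HE, ‖χ‖ = 1 ∧ V (t (U g φ) η) = t (U g φ) χ := by
    intro g
    have hx : ‖U g φ‖ = 1 := by rw [(U g).norm_map, hφ]
    have hxx : ⟪U g φ, U g φ⟫_ℂ = 1 := by rw [inner_self_eq_norm_sq_to_K, hx]; norm_num
    apply aux_pure t ht V η hη e (U g φ) hx
    have h1 := (hdil (U g φ) (U g φ) (U g φ)).symm
    rw [hfixg g] at h1
    rw [h1]
    simp only [ContinuousLinearMap.smulRight_apply, innerSL_apply_apply, inner_smul_right, hxx,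
      mul_one]
  choose χ hχ1 hχ2 using hpure
  have hχχ : ∀ g, ⟪χ g, χ g⟫_ℂ = 1 := fun g => by
    rw [inner_self_eq_norm_sq_to_K, hχ1 g]; norm_num
  -- adjacent vertices have equal environment states
  have hadj : ∀ g h : G, ⟪U g φ, U h φ⟫_ℂ ≠ 0 → χ g = χ h := by
    intro g h hne
    have h1 : ⟪U g φ, U h φ⟫_ℂ * ⟪χ g, χ h⟫_ℂ = ⟪U g φ, U h φ⟫_ℂ * 1 := by
      rw [← ht, ← hχ2 g, ← hχ2 h, V.inner_map_map, ht, hηη]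
    have h2 : ⟪χ g, χ h⟫_ℂ = 1 := mul_left_cancel₀ hne h1
    exact aux_eq_of_inner_one (hχχ g) (hχχ h) h2
  subst hConn
  -- in a connected component all environment states agree
  have hcomp : ∀ g : G, Relation.ReflTransGen (fun g h : G => ⟪U g φ, U h φ⟫_ℂ ≠ 0) g₀ g →
      χ g = χ g₀ := by
    intro g hg
    induction hg with
    | refl => rfl
    | tail _ hbc ih => exact (hadj _ _ hbc).symm.trans ih
  -- V acts as ⊗ χ g₀ on the whole component subspace
  have hVψ : V (t ψ η) = t ψ (χ g₀) := by
    refine Submodule.span_induction ?_ ?_ ?_ ?_ hψ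
    · rintro z ⟨g, hg, rfl⟩
      rw [hχ2 g, hcomp g hg]
    · simp
    · intro x y _ _ hx hy
      simp only [map_add, LinearMap.add_apply, hx, hy]
    · intro c x _ hx
      simp only [map_smul, LinearMap.smul_apply, hx]
  -- conclude by computing matrix elements
  ext b
  apply ext_inner_left ℂ
  intro a
  rw [hdil]
  calc ∑ i, ⟪t a (e i), V (⟪t ψ η, V.symm (t b (e i))⟫_ℂ • t ψ η)⟫_ℂ
      = ∑ i, (⟪ψ, b⟫_ℂ * ⟪a, ψ⟫_ℂ) * (⟪χ g₀, e i⟫_ℂ * ⟪e i, χ g₀⟫_ℂ) := by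
        refine Finset.sum_congr rfl fun i _ => ?_
        rw [map_smul, inner_smul_right,
          show ⟪t ψ η, V.symm (t b (e i))⟫_ℂ = ⟪V (t ψ η), t b (e i)⟫_ℂ from by
            rw [← V.inner_map_map (t ψ η), V.apply_symm_apply],
          hVψ, ht, ht]
        ring
    _ = (⟪ψ, b⟫_ℂ * ⟪a, ψ⟫_ℂ) * ∑ i, ⟪χ g₀, e i⟫_ℂ * ⟪e i, χ g₀⟫_ℂ := by
        rw [Finset.mul_sum]
    _ = ⟪ψ, b⟫_ℂ * ⟪a, ψ⟫_ℂ := by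
        rw [e.sum_inner_mul_inner, hχχ g₀]; ring
    _ = ⟪a, ((innerSL ℂ ψ).smulRight ψ) b⟫_ℂ := by
        simp only [ContinuousLinearMap.smulRight_apply, innerSL_apply_apply, inner_smul_right]
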